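/- Define f(p) = ln(2 + 4^p) + (p−1)·ln(2·3^{p/(p−1)} + 1) and w(p) = p·f'(p) − f(p) for p ∈ (1,2]. Then lim_{p→1⁺} w(p) = (2/3)·ln 4 − ln 3, which is negative. -/

import Mathlib

open Filter Topology

/-- `f(p) = ln(2 + 4^p) + (p−1)·ln(2·3^{p/(p−1)} + 1)`. -/
noncomputable def f (p : ℝ) : ℝ :=
  Real.log (2 + (4 : ℝ) ^ p)
    + (p - 1) * Real.log (2 * (3 : ℝ) ^ (p / (p - 1)) + 1)

/-- `f'(p)`, the derivative of `f` on `(1,2]`. -/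
noncomputable def f' (p : ℝ) : ℝ :=
  ((4 : ℝ) ^ p / (2 + (4 : ℝ) ^ p)) * Real.log 4
    + Real.log (2 + (3 : ℝ) ^ (-(p / (p - 1)))) + Real.log 3
    + Real.log 3 / ((p - 1) * (2 * (3 : ℝ) ^ (p / (p - 1)) + 1))

/-- `w(p) = p·f'(p) − f(p)`. -/
noncomputable def w (p : ℝ) : ℝ := p * f' p - f p

lemma log_split (t : ℝ) :
    Real.log (2 * (3:ℝ) ^ t + 1) = t * Real.log 3 + Real.log (2 + (3:ℝ) ^ (-t)) := by
  have h3 : (0:ℝ) < 3 := by norm_num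
  have hpos : (0:ℝ) < (3:ℝ) ^ t := Real.rpow_pos_of_pos h3 t
  have hpos' : (0:ℝ) < 2 + (3:ℝ) ^ (-t) := by positivity
  have key : 2 * (3:ℝ) ^ t + 1 = (3:ℝ) ^ t * (2 + (3:ℝ) ^ (-t)) := by
    rw [mul_add, ← Real.rpow_add h3, add_neg_cancel, Real.rpow_zero]
    ring
  rw [key, Real.log_mul (ne_of_gt hpos) (ne_of_gt hpos'), Real.log_rpow h3]

/-- `lim_{p→1⁺} w(p) = (2/3)·ln 4 − ln 3`, which is negative. -/
theorem w_tendsto_and_neg :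
    Tendsto w (𝓝[>] (1 : ℝ)) (𝓝 ((2 / 3) * Real.log 4 - Real.log 3)) ∧
    (2 / 3) * Real.log 4 - Real.log 3 < 0 := by
  constructor
  · set l : Filter ℝ := 𝓝[>] (1 : ℝ) with hl
    have hmem : ∀ᶠ p in l, (1:ℝ) < p := self_mem_nhdsWithin
    -- p - 1 tends to 0 within (0, ∞)
    have h1 : Tendsto (fun p : ℝ => p - 1) l (𝓝[>] 0) := by
      apply tendsto_nhdsWithin_of_tendsto_nhds_of_eventually_within
      · have : Tendsto (fun p : ℝ => p - 1) (𝓝 1) (𝓝 0) := by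
          have h0 := Filter.Tendsto.sub_const (tendsto_id (x := 𝓝 (1:ℝ))) 1
          simpa using h0
        exact this.mono_left nhdsWithin_le_nhds
      · filter_upwards [hmem] with p hp
        simp [Set.mem_Ioi, sub_pos, hp]
    have hs : Tendsto (fun p : ℝ => (p - 1)⁻¹) l atTop :=
      tendsto_inv_nhdsGT_zero.comp h1
    -- t = p/(p-1) tends to atTop
    have ht : Tendsto (fun p : ℝ => p / (p - 1)) l atTop := by
      have heq : ∀ᶠ p in l, 1 + (p - 1)⁻¹ = p / (p - 1) := by
        filter_upwards [hmem] with p hp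
        have : p - 1 ≠ 0 := by linarith
        field_simp
        ring
      exact (tendsto_atTop_add_const_left _ 1 hs).congr' heq
    -- u = (p/(p-1)) * log 3 tends to atTop
    have hlog3 : (0:ℝ) < Real.log 3 := Real.log_pos (by norm_num)
    have hu : Tendsto (fun p : ℝ => p / (p - 1) * Real.log 3) l atTop :=
      ht.atTop_mul_const hlog3
    -- 3 ^ (p/(p-1)) tends to atTop
    have h3t : Tendsto (fun p : ℝ => (3:ℝ) ^ (p / (p - 1))) l atTop := by
      have : Tendsto (fun p : ℝ => Real.exp (p / (p - 1) * Real.log 3)) l atTop :=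
        Real.tendsto_exp_atTop.comp hu
      refine this.congr (fun p => ?_)
      rw [show p / (p - 1) * Real.log 3 = Real.log 3 * (p / (p - 1)) from mul_comm _ _,
        ← Real.rpow_def_of_pos (by norm_num : (0:ℝ) < 3)]
    -- 3 ^ (-(p/(p-1))) tends to 0
    have h3t0 : Tendsto (fun p : ℝ => (3:ℝ) ^ (-(p / (p - 1)))) l (𝓝 0) := by
      have := tendsto_inv_atTop_zero.comp h3t
      refine this.congr (fun p => ?_)
      simp [Real.rpow_neg (by norm_num : (0:ℝ) ≤ 3)]
    -- log (2 + 3^{-t}) tends to log 2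
    have hln2 : Tendsto (fun p : ℝ => Real.log (2 + (3:ℝ) ^ (-(p / (p - 1))))) l
        (𝓝 (Real.log 2)) := by
      have h2 : Tendsto (fun p : ℝ => 2 + (3:ℝ) ^ (-(p / (p - 1)))) l (𝓝 2) := by
        have := h3t0.const_add (2:ℝ)
        simpa using this
      exact ((Real.continuousAt_log (by norm_num)).tendsto.comp h2)
    -- D = (p-1) * (2 * 3^t + 1) tends to atTop
    have hD : Tendsto (fun p : ℝ => (p - 1) * (2 * (3:ℝ) ^ (p / (p - 1)) + 1)) l atTop := by
      have hF : Tendsto (fun p : ℝ => Real.log 3 *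
          (Real.exp (p / (p - 1) * Real.log 3) / (p / (p - 1) * Real.log 3) ^ 1)) l atTop := by
        exact ((Real.tendsto_exp_div_pow_atTop 1).comp hu).const_mul_atTop hlog3
      refine tendsto_atTop_mono' l ?_ hF
      filter_upwards [hmem, ht.eventually_gt_atTop 0] with p hp hpt
      have hp1 : (0:ℝ) < p - 1 := by linarith
      have h3pos : (0:ℝ) < (3:ℝ) ^ (p / (p - 1)) := Real.rpow_pos_of_pos (by norm_num) _
      have hexp : Real.exp (p / (p - 1) * Real.log 3) = (3:ℝ) ^ (p / (p - 1)) := by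
        rw [show p / (p - 1) * Real.log 3 = Real.log 3 * (p / (p - 1)) from mul_comm _ _,
          ← Real.rpow_def_of_pos (by norm_num : (0:ℝ) < 3)]
      rw [pow_one, hexp]
      have hln3 : Real.log 3 ≠ 0 := ne_of_gt hlog3
      have htne : p / (p - 1) ≠ 0 := ne_of_gt hpt
      have ht3 : Real.log 3 * ((3:ℝ) ^ (p / (p - 1)) / (p / (p - 1) * Real.log 3))
          = (3:ℝ) ^ (p / (p - 1)) / (p / (p - 1)) := by
        field_simp
      rw [ht3]
      -- goal : 3^t / t ≤ (p-1)(2·3^t + 1)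
      have key : (3:ℝ) ^ (p / (p - 1)) / (p / (p - 1))
          = (p - 1) / p * (3:ℝ) ^ (p / (p - 1)) := by
        rw [div_div_eq_mul_div, div_mul_eq_mul_div, mul_comm]
      rw [key]
      have hstep : (p - 1) / p * (3:ℝ) ^ (p / (p - 1)) ≤ (p - 1) * (3:ℝ) ^ (p / (p - 1)) := by
        exact mul_le_mul_of_nonneg_right (div_le_self hp1.le (by linarith)) h3pos.le
      refine hstep.trans ?_
      have : (3:ℝ) ^ (p / (p - 1)) ≤ 2 * (3:ℝ) ^ (p / (p - 1)) + 1 := by linarith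
      exact mul_le_mul_of_nonneg_left this (le_of_lt hp1)
    -- last term tends to 0
    have hlast : Tendsto (fun p : ℝ =>
        p * (Real.log 3 / ((p - 1) * (2 * (3:ℝ) ^ (p / (p - 1)) + 1)))) l (𝓝 0) := by
      have hp1 : Tendsto (fun p : ℝ => p) l (𝓝 1) :=
        (tendsto_id (x := l)).mono_right nhdsWithin_le_nhds
      have hinv : Tendsto (fun p : ℝ =>
          ((p - 1) * (2 * (3:ℝ) ^ (p / (p - 1)) + 1))⁻¹) l (𝓝 0) :=
        hD.inv_tendsto_atTop
      have := (hp1.mul ((hinv.const_mul (Real.log 3))))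
      simpa [div_eq_mul_inv] using this
    -- continuous part
    have hcont : Tendsto (fun p : ℝ =>
        p * ((4:ℝ) ^ p / (2 + (4:ℝ) ^ p)) * Real.log 4 - Real.log (2 + (4:ℝ) ^ p)) l
        (𝓝 ((2/3) * Real.log 4 - Real.log 6)) := by
      have h4 : Tendsto (fun p : ℝ => (4:ℝ) ^ p) l (𝓝 4) := by
        have : ContinuousAt (fun p : ℝ => (4:ℝ) ^ p) 1 :=
          Real.continuousAt_const_rpow (by norm_num)
        simpa using this.tendsto.mono_left nhdsWithin_le_nhds
      have hp1 : Tendsto (fun p : ℝ => p) l (𝓝 1) :=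
        (tendsto_id (x := l)).mono_right nhdsWithin_le_nhds
      have hden : Tendsto (fun p : ℝ => 2 + (4:ℝ) ^ p) l (𝓝 6) := by
        have := h4.const_add (2:ℝ); norm_num at this; exact this
      have hfrac : Tendsto (fun p : ℝ => (4:ℝ) ^ p / (2 + (4:ℝ) ^ p)) l (𝓝 (4/6)) :=
        h4.div hden (by norm_num)
      have hlog : Tendsto (fun p : ℝ => Real.log (2 + (4:ℝ) ^ p)) l (𝓝 (Real.log 6)) :=
        (Real.continuousAt_log (by norm_num)).tendsto.comp hden
      have key := ((hp1.mul hfrac).mul_const (Real.log 4)).sub hlog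
      have he : (1:ℝ) * (4/6) * Real.log 4 - Real.log 6
          = (2/3) * Real.log 4 - Real.log 6 := by norm_num
      rw [he] at key
      exact key
    -- combine
    have htotal := (hcont.add hln2).add hlast
    have hval : (2/3) * Real.log 4 - Real.log 6 + Real.log 2 + 0
        = (2/3) * Real.log 4 - Real.log 3 := by
      have h6 : Real.log 6 = Real.log 2 + Real.log 3 := by
        rw [show (6:ℝ) = 2 * 3 by norm_num, Real.log_mul (by norm_num) (by norm_num)]
      rw [h6]; ring
    rw [hval] at htotal
    refine htotal.congr' ?_
    filter_upwards [hmem] with p hp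
    have hne : p - 1 ≠ 0 := by linarith
    have hsplit := log_split (p / (p - 1))
    have hpp : (p - 1) * (p / (p - 1)) = p := by field_simp
    simp only [w, f, f']
    rw [hsplit]
    linear_combination Real.log 3 * hpp
  · have h16 : Real.log 16 < Real.log 27 := Real.log_lt_log (by norm_num) (by norm_num)
    have e1 : Real.log 16 = 2 * Real.log 4 := by
      rw [show (16:ℝ) = 4 ^ (2:ℕ) by norm_num, Real.log_pow]; norm_num
    have e2 : Real.log 27 = 3 * Real.log 3 := by
      rw [show (27:ℝ) = 3 ^ (3:ℕ) by norm_num, Real.log_pow]; norm_num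
    rw [e1, e2] at h16
    linarith
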